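/- Encode each Wang tile set as a finite list of quadruples of natural numbers (the four edge colors of each tile). The set of encodings of Wang tile sets that do NOT admit a tiling of the plane is computably enumerable (recursively enumerable): there is an algorithm that, given a tile set, halts exactly when the tile set does not tile the plane (by searching for an n such that no tiling of the n × n square exists). -/

import Mathlib

/-- `f` is a valid Wang tiling of the plane by the tile set encoded by the list `ts`,
each tile being a quadruple `(north, east, south, west)` of natural-number colors:
the east color of each tile equals the west color of its right neighbor, and the
north color of each tile equals the south color of its upper neighbor. -/
def IsWangTilingOf (ts : List (ℕ × ℕ × ℕ × ℕ)) (f : ℤ × ℤ → Fin ts.length) : Prop :=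
  ∀ x y : ℤ,
    (ts.get (f (x, y))).2.1 = (ts.get (f (x + 1, y))).2.2.2 ∧
    (ts.get (f (x, y))).1 = (ts.get (f (x, y + 1))).2.2.1

/-- The encoded Wang tile set `ts` admits a tiling of the plane. -/
def WangTilesPlane (ts : List (ℕ × ℕ × ℕ × ℕ)) : Prop :=
  ∃ f : ℤ × ℤ → Fin ts.length, IsWangTilingOf ts f

namespace WangAux

abbrev Tile := ℕ × ℕ × ℕ × ℕ

/-- The tile at position-index `idx` of the square assignment encoded by `k`
(base-`ts.length` digits). -/
def tileAt (ts : List Tile) (k idx : ℕ) : Tile :=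
  ts.getD (k / ts.length ^ idx % ts.length) (0, 0, 0, 0)

/-- Check that assignment `k` is a valid tiling of the `(2n+2) × (2n+2)` square. -/
def checkk (ts : List Tile) (n k : ℕ) : Bool :=
  (List.range (2 * n + 1)).all fun i => (List.range (2 * n + 1)).all fun j =>
    decide ((tileAt ts k (i + (2 * n + 2) * j)).2.1 =
        (tileAt ts k (i + 1 + (2 * n + 2) * j)).2.2.2) &&
    decide ((tileAt ts k (i + (2 * n + 2) * j)).1 =
        (tileAt ts k (i + (2 * n + 2) * (j + 1))).2.2.1)

/-- Search over all assignments of the `(2n+2) × (2n+2)` square. -/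
def ok (ts : List Tile) (n : ℕ) : Bool :=
  (List.range (ts.length ^ ((2 * n + 2) * (2 * n + 2)))).any fun k => checkk ts n k

/-- The box `[-n, n]²` can be consistently tiled. -/
def BoxOK (ts : List Tile) (n : ℕ) : Prop :=
  ∃ g : ℤ × ℤ → Fin ts.length, ∀ x y : ℤ, x.natAbs ≤ n → y.natAbs ≤ n →
    (ts.get (g (x, y))).2.1 = (ts.get (g (x + 1, y))).2.2.2 ∧
    (ts.get (g (x, y))).1 = (ts.get (g (x, y + 1))).2.2.1
theorem ofDigits_lt {b : ℕ} : ∀ {l : List ℕ}, (∀ x ∈ l, x < b) →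
    Nat.ofDigits b l < b ^ l.length := by
  intro l
  induction l with
  | nil => intro _; simp [Nat.ofDigits]
  | cons d l ih =>
    intro h
    have hd : d < b := h d List.mem_cons_self
    have hl : Nat.ofDigits b l < b ^ l.length := ih fun x hx => h x (List.mem_cons_of_mem _ hx)
    have hco : Nat.ofDigits b (d :: l) = d + b * Nat.ofDigits b l := by
      rw [Nat.ofDigits_cons]
    rw [hco, List.length_cons, pow_succ]
    calc d + b * Nat.ofDigits b l < b + b * Nat.ofDigits b l := by omega
      _ = b * (Nat.ofDigits b l + 1) := by ring
      _ ≤ b * b ^ l.length := Nat.mul_le_mul_left _ hl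
      _ = b ^ l.length * b := mul_comm _ _

theorem ofDigits_digit {b : ℕ} (hb : 0 < b) : ∀ (l : List ℕ) (i : ℕ), (∀ x ∈ l, x < b) →
    i < l.length → Nat.ofDigits b l / b ^ i % b = l.getD i 0 := by
  intro l
  induction l with
  | nil => intro i _ h; simp at h
  | cons d l ih =>
    intro i h hi
    have hd : d < b := h d List.mem_cons_self
    cases i with
    | zero =>
      simp [Nat.ofDigits_cons, Nat.add_mul_mod_self_left, Nat.mod_eq_of_lt hd]
    | succ i =>
      have hco : Nat.ofDigits b (d :: l) = d + b * Nat.ofDigits b l := by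
        rw [Nat.ofDigits_cons]
      have key : Nat.ofDigits b (d :: l) / b ^ (i + 1) = Nat.ofDigits b l / b ^ i := by
        rw [pow_succ', ← Nat.div_div_eq_div_mul]
        congr 1
        rw [hco, Nat.add_mul_div_left _ _ hb, Nat.div_eq_of_lt hd, Nat.zero_add]
      rw [key]
      simp only [List.getD_cons_succ]
      exact ih i (fun x hx => h x (List.mem_cons_of_mem _ hx)) (by simpa using hi)

theorem tileAt_eq_get {ts : List Tile} {k idx : ℕ}
    (h : k / ts.length ^ idx % ts.length < ts.length) :
    tileAt ts k idx = ts.get ⟨_, h⟩ := by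
  simp [tileAt, List.getD_eq_getElem?_getD, List.getElem?_eq_getElem h, List.get_eq_getElem]

theorem get_congr (ts : List Tile) {a : ℕ} (h : a < ts.length) {b : Fin ts.length}
    (hab : a = b.val) : ts.get ⟨a, h⟩ = ts.get b := by
  cases b; simp_all

theorem ok_iff_boxOK (ts : List Tile) (n : ℕ) : ok ts n = true ↔ BoxOK ts n := by
  constructor
  · intro h
    obtain ⟨k, hk, hck⟩ := List.any_eq_true.1 h
    rw [List.mem_range] at hk
    have hL : 0 < ts.length := by
      rcases Nat.eq_zero_or_pos ts.length with h0 | h0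
      · rw [h0, Nat.zero_pow (by positivity : 0 < (2*n+2)*(2*n+2))] at hk; omega
      · exact h0
    refine ⟨fun p => ⟨k / ts.length ^ (((p.1 + n).toNat) + (2*n+2) * ((p.2 + n).toNat)) % ts.length,
      Nat.mod_lt _ hL⟩, ?_⟩
    intro x y hx hy
    have hcc := List.all_eq_true.1 hck ((x + n).toNat) (List.mem_range.2 (by omega))
    have hcc2 := List.all_eq_true.1 hcc ((y + n).toNat) (List.mem_range.2 (by omega))
    rw [Bool.and_eq_true, decide_eq_true_eq, decide_eq_true_eq] at hcc2
    have e1 : (x + 1 + (n : ℤ)).toNat = (x + n).toNat + 1 := by omega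
    have e2 : (y + 1 + (n : ℤ)).toNat = (y + n).toNat + 1 := by omega
    constructor
    · have := hcc2.1
      rw [tileAt_eq_get (Nat.mod_lt _ hL), tileAt_eq_get (Nat.mod_lt _ hL)] at this
      simpa [e1] using this
    · have := hcc2.2
      rw [tileAt_eq_get (Nat.mod_lt _ hL), tileAt_eq_get (Nat.mod_lt _ hL)] at this
      simpa [e2] using this
  · rintro ⟨g, hg⟩
    have hL : 0 < ts.length := (g (0, 0)).pos
    set dig : List ℕ := (List.range ((2*n+2) * (2*n+2))).map
      (fun idx => (g ((idx % (2*n+2) : ℕ) - (n : ℤ), (idx / (2*n+2) : ℕ) - (n : ℤ))).val)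
      with hdig
    have hdl : ∀ x ∈ dig, x < ts.length := by
      intro x hx
      simp only [hdig, List.mem_map] at hx
      obtain ⟨idx, _, rfl⟩ := hx
      exact (g _).isLt
    have hlen : dig.length = (2*n+2) * (2*n+2) := by simp [hdig]
    have hklt : Nat.ofDigits ts.length dig < ts.length ^ ((2*n+2) * (2*n+2)) :=
      hlen ▸ ofDigits_lt hdl
    have hdigit : ∀ i j : ℕ, i < 2*n+2 → j < 2*n+2 →
        Nat.ofDigits ts.length dig / ts.length ^ (i + (2*n+2) * j) % ts.length
          = (g ((i : ℤ) - n, (j : ℤ) - n)).val := by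
      intro i j hi hj
      have hidx : i + (2*n+2) * j < (2*n+2) * (2*n+2) := by
        calc i + (2*n+2) * j < (2*n+2) + (2*n+2) * j := by omega
          _ = (2*n+2) * (j + 1) := by ring
          _ ≤ (2*n+2) * (2*n+2) := Nat.mul_le_mul_left _ (by omega)
      rw [ofDigits_digit hL dig _ hdl (by rw [hlen]; exact hidx), hdig,
        List.getD_eq_getElem _ _ (by simpa using hidx), List.getElem_map, List.getElem_range]
      have m1 : (i + (2*n+2) * j) % (2*n+2) = i := by
        rw [Nat.add_mul_mod_self_left, Nat.mod_eq_of_lt hi]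
      have m2 : (i + (2*n+2) * j) / (2*n+2) = j := by
        rw [Nat.add_mul_div_left _ _ (by omega : 0 < 2*n+2), Nat.div_eq_of_lt hi, Nat.zero_add]
      rw [m1, m2]
    apply List.any_eq_true.2
    refine ⟨Nat.ofDigits ts.length dig, List.mem_range.2 hklt, ?_⟩
    apply List.all_eq_true.2
    intro i hi
    rw [List.mem_range] at hi
    apply List.all_eq_true.2
    intro j hj
    rw [List.mem_range] at hj
    rw [Bool.and_eq_true, decide_eq_true_eq, decide_eq_true_eq]
    have hx : ((i : ℤ) - n).natAbs ≤ n := by omega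
    have hy : ((j : ℤ) - n).natAbs ≤ n := by omega
    obtain ⟨c1, c2⟩ := hg ((i : ℤ) - n) ((j : ℤ) - n) hx hy
    have d1 := hdigit i j (by omega) (by omega)
    have d2 := hdigit (i + 1) j (by omega) (by omega)
    have d3 := hdigit i (j + 1) (by omega) (by omega)
    have e1 : ((i : ℤ) - n + 1) = ((i + 1 : ℕ) : ℤ) - n := by push_cast; ring
    have e2 : ((j : ℤ) - n + 1) = ((j + 1 : ℕ) : ℤ) - n := by push_cast; ring
    rw [e1] at c1
    rw [e2] at c2
    constructor
    · rw [tileAt_eq_get (Nat.mod_lt _ hL), tileAt_eq_get (Nat.mod_lt _ hL),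
        get_congr ts _ d1, get_congr ts _ d2]
      exact c1
    · rw [tileAt_eq_get (Nat.mod_lt _ hL), tileAt_eq_get (Nat.mod_lt _ hL),
        get_congr ts _ d1, get_congr ts _ d3]
      exact c2
theorem plane_iff_boxes (ts : List Tile) : WangTilesPlane ts ↔ ∀ n, BoxOK ts n := by
  constructor
  · rintro ⟨f, hf⟩ n
    exact ⟨f, fun x y _ _ => hf x y⟩
  · intro h
    choose g hg using h
    set U := Filter.hyperfilter ℕ with hU
    have hFin : ∀ p : ℤ × ℤ, ∃ a, {m | g m p = a} ∈ U := by
      intro p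
      obtain ⟨a, ha⟩ := Ultrafilter.eq_pure_of_finite (U.map fun m => g m p)
      refine ⟨a, ?_⟩
      have h1 : ({a} : Set (Fin ts.length)) ∈ Ultrafilter.map (fun m => g m p) U := by
        rw [ha]; exact Ultrafilter.mem_pure.2 rfl
      rw [Ultrafilter.mem_map] at h1
      simpa [Set.preimage, Set.mem_singleton_iff] using h1
    choose F hF using hFin
    refine ⟨F, fun x y => ?_⟩
    have hbig : {m | x.natAbs ≤ m ∧ y.natAbs ≤ m} ∈ U := by
      have hfin : ({m | x.natAbs ≤ m ∧ y.natAbs ≤ m}ᶜ : Set ℕ).Finite := by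
        apply Set.Finite.subset (Set.finite_Iio (max x.natAbs y.natAbs))
        intro m hm
        simp only [Set.mem_compl_iff, Set.mem_setOf_eq, not_and_or, not_le] at hm
        simp only [Set.mem_Iio]
        omega
      have := Filter.compl_mem_hyperfilter_of_finite hfin
      simpa using this
    have hmem : ({m | g m (x, y) = F (x, y)} ∩ ({m | g m (x + 1, y) = F (x + 1, y)} ∩
        ({m | g m (x, y + 1) = F (x, y + 1)} ∩ {m | x.natAbs ≤ m ∧ y.natAbs ≤ m}))) ∈ U :=
      Filter.inter_mem (hF _) (Filter.inter_mem (hF _) (Filter.inter_mem (hF _) hbig))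
    obtain ⟨m, h1, h2, h3, h4, h5⟩ := Filter.nonempty_of_mem hmem
    rw [← h1, ← h2, ← h3]
    exact hg m x y h4 h5
open Primrec

theorem primrec_pow : Primrec₂ ((· ^ ·) : ℕ → ℕ → ℕ) :=
  Primrec₂.unpaired'.1 Nat.Primrec.pow

theorem primrec_list_all {α β : Type} [Primcodable α] [Primcodable β] {f : α → List β}
    {p : α → β → Bool} (hf : Primrec f) (hp : Primrec₂ p) :
    Primrec fun a => (f a).all (p a) := by
  have h := Primrec.list_foldr (σ := Bool) hf (Primrec.const true)
    ((Primrec.and.comp (hp.comp Primrec.fst (Primrec.fst.comp Primrec.snd))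
      (Primrec.snd.comp Primrec.snd)).to₂)
  exact h.of_eq fun a => by
    induction f a with
    | nil => rfl
    | cons b l ih => simp [ih, List.all_cons]

theorem primrec_list_any {α β : Type} [Primcodable α] [Primcodable β] {f : α → List β}
    {p : α → β → Bool} (hf : Primrec f) (hp : Primrec₂ p) :
    Primrec fun a => (f a).any (p a) := by
  have h := Primrec.list_foldr (σ := Bool) hf (Primrec.const false)
    ((Primrec.or.comp (hp.comp Primrec.fst (Primrec.fst.comp Primrec.snd))
      (Primrec.snd.comp Primrec.snd)).to₂)
  exact h.of_eq fun a => by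
    induction f a with
    | nil => rfl
    | cons b l ih => simp [ih, List.any_cons]

theorem primrec_tileAt {δ : Type} [Primcodable δ] {ts : δ → List Tile} {k idx : δ → ℕ}
    (hts : Primrec ts) (hk : Primrec k) (hidx : Primrec idx) :
    Primrec fun d => tileAt (ts d) (k d) (idx d) :=
  (Primrec.list_getD ((0, 0, 0, 0) : Tile)).comp hts
    (Primrec.nat_mod.comp
      (Primrec.nat_div.comp hk (primrec_pow.comp (Primrec.list_length.comp hts) hidx))
      (Primrec.list_length.comp hts))

theorem primrec_ok : Primrec₂ ok := by
  -- γ = ((( ts, n), k), i) × ℕ  with j last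
  have tsγ : Primrec fun c : (((List Tile × ℕ) × ℕ) × ℕ) × ℕ => c.1.1.1.1 :=
    fst.comp (fst.comp (fst.comp fst))
  have nγ : Primrec fun c : (((List Tile × ℕ) × ℕ) × ℕ) × ℕ => c.1.1.1.2 :=
    snd.comp (fst.comp (fst.comp fst))
  have kγ : Primrec fun c : (((List Tile × ℕ) × ℕ) × ℕ) × ℕ => c.1.1.2 :=
    snd.comp (fst.comp fst)
  have iγ : Primrec fun c : (((List Tile × ℕ) × ℕ) × ℕ) × ℕ => c.1.2 := snd.comp fst
  have jγ : Primrec fun c : (((List Tile × ℕ) × ℕ) × ℕ) × ℕ => c.2 := snd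
  have sγ : Primrec fun c : (((List Tile × ℕ) × ℕ) × ℕ) × ℕ => 2 * c.1.1.1.2 + 2 :=
    nat_add.comp (nat_mul.comp (const 2) nγ) (const 2)
  have idx1 : Primrec fun c : (((List Tile × ℕ) × ℕ) × ℕ) × ℕ =>
      c.1.2 + (2 * c.1.1.1.2 + 2) * c.2 :=
    nat_add.comp iγ (nat_mul.comp sγ jγ)
  have idx2 : Primrec fun c : (((List Tile × ℕ) × ℕ) × ℕ) × ℕ =>
      c.1.2 + 1 + (2 * c.1.1.1.2 + 2) * c.2 :=
    nat_add.comp (nat_add.comp iγ (const 1)) (nat_mul.comp sγ jγ)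
  have idx3 : Primrec fun c : (((List Tile × ℕ) × ℕ) × ℕ) × ℕ =>
      c.1.2 + (2 * c.1.1.1.2 + 2) * (c.2 + 1) :=
    nat_add.comp iγ (nat_mul.comp sγ (nat_add.comp jγ (const 1)))
  have t1 := primrec_tileAt tsγ kγ idx1
  have t2 := primrec_tileAt tsγ kγ idx2
  have t3 := primrec_tileAt tsγ kγ idx3
  have e1 : Primrec fun c : (((List Tile × ℕ) × ℕ) × ℕ) × ℕ =>
      decide ((tileAt c.1.1.1.1 c.1.1.2 (c.1.2 + (2 * c.1.1.1.2 + 2) * c.2)).2.1 =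
        (tileAt c.1.1.1.1 c.1.1.2 (c.1.2 + 1 + (2 * c.1.1.1.2 + 2) * c.2)).2.2.2) :=
    (Primrec.eq.comp (fst.comp (snd.comp t1)) (snd.comp (snd.comp (snd.comp t2)))).decide
  have e2 : Primrec fun c : (((List Tile × ℕ) × ℕ) × ℕ) × ℕ =>
      decide ((tileAt c.1.1.1.1 c.1.1.2 (c.1.2 + (2 * c.1.1.1.2 + 2) * c.2)).1 =
        (tileAt c.1.1.1.1 c.1.1.2 (c.1.2 + (2 * c.1.1.1.2 + 2) * (c.2 + 1))).2.2.1) :=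
    (Primrec.eq.comp (fst.comp t1) (fst.comp (snd.comp (snd.comp t3)))).decide
  have inner := Primrec.and.comp e1 e2
  -- all over j : β = ((ts,n),k) × ℕ (with i)
  have nβ : Primrec fun b : ((List Tile × ℕ) × ℕ) × ℕ => b.1.1.2 :=
    snd.comp (fst.comp fst)
  have rangeβ : Primrec fun b : ((List Tile × ℕ) × ℕ) × ℕ => List.range (2 * b.1.1.2 + 1) :=
    list_range.comp (nat_add.comp (nat_mul.comp (const 2) nβ) (const 1))
  have allj := primrec_list_all rangeβ inner.to₂
  -- all over i : over α = (ts,n) × ℕ (with k)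
  have nα : Primrec fun a : (List Tile × ℕ) × ℕ => a.1.2 := snd.comp fst
  have rangeα : Primrec fun a : (List Tile × ℕ) × ℕ => List.range (2 * a.1.2 + 1) :=
    list_range.comp (nat_add.comp (nat_mul.comp (const 2) nα) (const 1))
  have alli := primrec_list_all rangeα allj.to₂
  -- any over k : over List Tile × ℕ
  have hlen : Primrec fun q : List Tile × ℕ => q.1.length := list_length.comp fst
  have hexp : Primrec fun q : List Tile × ℕ => (2 * q.2 + 2) * (2 * q.2 + 2) :=
    nat_mul.comp (nat_add.comp (nat_mul.comp (const 2) snd) (const 2))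
      (nat_add.comp (nat_mul.comp (const 2) snd) (const 2))
  have rangek : Primrec fun q : List Tile × ℕ =>
      List.range (q.1.length ^ ((2 * q.2 + 2) * (2 * q.2 + 2))) :=
    list_range.comp (primrec_pow.comp hlen hexp)
  have final := primrec_list_any rangek alli.to₂
  exact final.to₂.of_eq fun ts n => rfl

theorem key (ts : List Tile) : ¬ WangTilesPlane ts ↔ ∃ n, ok ts n = false := by
  have h1 : WangTilesPlane ts ↔ ∀ n, BoxOK ts n := plane_iff_boxes ts
  rw [h1, not_forall]
  refine exists_congr fun n => ?_
  rw [← ok_iff_boxOK, Bool.not_eq_true]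

end WangAux

open WangAux in
/-- the set of (encodings of) Wang tile sets that do *not* tile the
plane is computably enumerable. -/
theorem not_tiling_re : REPred (fun ts : List (ℕ × ℕ × ℕ × ℕ) => ¬ WangTilesPlane ts) := by
  have hcomp : Computable₂ fun (ts : List Tile) (n : ℕ) => !ok ts n :=
    ((Primrec.not.comp primrec_ok).to₂).to_comp
  have hpart : Partrec₂ fun (ts : List Tile) (n : ℕ) => (Part.some (!ok ts n) : Part Bool) :=
    hcomp.partrec₂
  have h := (Partrec.rfind hpart).map (((Computable.const ()).comp Computable.fst).to₂)
  refine h.of_eq fun ts => Part.ext fun u => ?_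
  rw [Part.mem_map_iff, Part.mem_assert_iff]
  constructor
  · rintro ⟨m, hm, -⟩
    have hspec := Nat.rfind_spec hm
    simp only [Part.mem_some_iff] at hspec
    refine ⟨(key ts).2 ⟨m, ?_⟩, Part.mem_some _⟩
    cases hok : ok ts m <;> simp [hok] at hspec ⊢
  · rintro ⟨hw, -⟩
    obtain ⟨m, hm⟩ := (key ts).1 hw
    have : (Nat.rfind fun n => Part.some (!ok ts n)).Dom := by
      apply Nat.rfind_dom.2
      exact ⟨m, by simp [hm], fun {k} _ => trivial⟩
    obtain ⟨a, ha⟩ := Part.dom_iff_mem.1 this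
    exact ⟨a, ha, by simp⟩
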